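/- For every complex number z with |z| < 1, the sum over k >= 0 of (H_{2k} - H_k) * z^k / ((3k+1) * binomial(3k,k)) equals -∫_0^1 ln(x/(1-x)) / (1 - z*x*(1-x)²) dx. -/

import Mathlib

open MeasureTheory intervalIntegral Set


private lemma log_abs_le {x : ℝ} (hx : 0 < x) (hx1 : x ≤ 1) :
    |Real.log x| ≤ 2 * x ^ (-(1/2) : ℝ) := by
  have h0 : Real.log x ≤ 0 := Real.log_nonpos hx.le hx1
  rw [abs_of_nonpos h0]
  have h1 : Real.log (x ^ (-(1/2) : ℝ)) ≤ x ^ (-(1/2) : ℝ) - 1 :=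
    Real.log_le_sub_one_of_pos (Real.rpow_pos_of_pos hx _)
  rw [Real.log_rpow hx] at h1
  nlinarith [Real.rpow_pos_of_pos hx (-(1/2) : ℝ)]

private lemma intInt_ppl (a b : ℕ) :
    IntervalIntegrable (fun x : ℝ => x ^ a * (1 - x) ^ b * Real.log x) volume 0 1 := by
  rw [intervalIntegrable_iff_integrableOn_Ioc_of_le zero_le_one]
  have hmeas : AEStronglyMeasurable (fun x : ℝ => x ^ a * (1 - x) ^ b * Real.log x)
      (volume.restrict (Ioc (0:ℝ) 1)) := by
    exact (((measurable_id.pow_const a).mul ((measurable_const.sub measurable_id).pow_const b)).mul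
      Real.measurable_log).aestronglyMeasurable
  have hg : IntegrableOn (fun x : ℝ => 2 * x ^ (-(1/2) : ℝ)) (Ioc (0:ℝ) 1) volume := by
    have := (intervalIntegrable_rpow' (a := 0) (b := 1) (r := (-(1/2) : ℝ)) (by norm_num)).const_mul 2
    rwa [intervalIntegrable_iff_integrableOn_Ioc_of_le zero_le_one] at this
  refine hg.integrable.mono' hmeas ?_
  filter_upwards [ae_restrict_mem measurableSet_Ioc] with x hx
  have hx0 : 0 < x := hx.1
  have hx1 : x ≤ 1 := hx.2
  have h1 : |x ^ a| ≤ 1 := by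
    rw [abs_of_nonneg (by positivity)]
    exact pow_le_one₀ hx0.le hx1
  have h2 : |(1 - x) ^ b| ≤ 1 := by
    rw [abs_pow]
    exact pow_le_one₀ (abs_nonneg _) (abs_le.mpr ⟨by linarith, by linarith⟩)
  have := log_abs_le hx0 hx1
  calc ‖x ^ a * (1 - x) ^ b * Real.log x‖
      = |x ^ a| * |(1 - x) ^ b| * |Real.log x| := by
        rw [Real.norm_eq_abs, abs_mul, abs_mul]
    _ ≤ 1 * 1 * |Real.log x| := by
        gcongr
    _ ≤ 2 * x ^ (-(1/2) : ℝ) := by rw [one_mul, one_mul]; exact this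

private lemma beta_nat (b : ℕ) : ∀ a : ℕ, ∫ x in (0:ℝ)..1, x ^ a * (1 - x) ^ b
    = (a.factorial * b.factorial : ℝ) / (a + b + 1).factorial := by
  induction b with
  | zero =>
    intro a
    simp only [pow_zero, mul_one, integral_pow]
    rw [Nat.add_zero, Nat.factorial_succ]
    push_cast
    rw [one_pow, zero_pow (by omega)]
    have : (a : ℝ) + 1 ≠ 0 := by positivity
    field_simp
    simp
  | succ b ih =>
    intro a
    have hderiv : ∀ x ∈ Set.uIcc (0:ℝ) 1,
        HasDerivAt (fun x : ℝ => x ^ (a+1) * (1 - x) ^ (b+1))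
          (((a:ℝ)+1) * (x ^ a * (1 - x) ^ (b+1)) - ((b:ℝ)+1) * (x ^ (a+1) * (1 - x) ^ b)) x := by
      intro x _
      have h1 : HasDerivAt (fun x : ℝ => x ^ (a+1)) (((a:ℝ)+1) * x ^ a) x := by
        simpa using hasDerivAt_pow (a+1) x
      have h2 : HasDerivAt (fun x : ℝ => (1 - x) ^ (b+1)) ((((b:ℝ)+1) * (1-x) ^ b) * (-1)) x := by
        have := (hasDerivAt_pow (b+1) (1 - x)).comp x ((hasDerivAt_id x).const_sub 1)
        simpa [Function.comp_def] using this
      have := h1.mul h2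
      refine this.congr_deriv ?_
      ring
    have key : (∫ x in (0:ℝ)..1, (((a:ℝ)+1) * (x ^ a * (1 - x) ^ (b+1))
        - ((b:ℝ)+1) * (x ^ (a+1) * (1 - x) ^ b))) = 0 := by
      rw [integral_eq_sub_of_hasDerivAt hderiv]
      · norm_num
      · apply Continuous.intervalIntegrable
        fun_prop
    have i1 : IntervalIntegrable (fun x : ℝ => x ^ a * (1 - x) ^ (b+1)) volume 0 1 :=
      (by fun_prop : Continuous fun x : ℝ => x ^ a * (1 - x) ^ (b+1)).intervalIntegrable 0 1
    have i2 : IntervalIntegrable (fun x : ℝ => x ^ (a+1) * (1 - x) ^ b) volume 0 1 :=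
      (by fun_prop : Continuous fun x : ℝ => x ^ (a+1) * (1 - x) ^ b).intervalIntegrable 0 1
    rw [integral_sub (i1.const_mul _) (i2.const_mul _), intervalIntegral.integral_const_mul, intervalIntegral.integral_const_mul,
      ih (a+1), sub_eq_zero] at key
    have ha : (a : ℝ) + 1 ≠ 0 := by positivity
    have hfa : ((a+1+b+1).factorial : ℝ) ≠ 0 := Nat.cast_ne_zero.mpr (Nat.factorial_ne_zero _)
    have heq : a + (b+1) + 1 = a + 1 + b + 1 := by omega
    have : (∫ x in (0:ℝ)..1, x ^ a * (1 - x) ^ (b+1))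
        = (((b:ℝ)+1) * (((a+1).factorial * b.factorial : ℝ) / (a+1+b+1).factorial)) / ((a:ℝ)+1) := by
      field_simp at key ⊢
      linarith [key]
    rw [this, heq]
    rw [Nat.factorial_succ a, Nat.factorial_succ b]
    push_cast
    field_simp


-- base case FTC: ∫ x^a log x = -1/(a+1)^2
private lemma J_base (a : ℕ) :
    ∫ x in (0:ℝ)..1, x ^ a * Real.log x = -(1 / ((a:ℝ)+1)^2) := by
  set G : ℝ → ℝ := fun x => x ^ (a+1) * Real.log x / ((a:ℝ)+1) - x ^ (a+1) / ((a:ℝ)+1)^2 with hG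
  have ha : (a : ℝ) + 1 ≠ 0 := by positivity
  have hcont : ContinuousOn G (Icc (0:ℝ) 1) := by
    have h1 : G = fun x : ℝ => x ^ a * (x * Real.log x) / ((a:ℝ)+1) - x ^ (a+1) / ((a:ℝ)+1)^2 := by
      funext x; simp only [hG]; rw [pow_succ]; ring
    rw [h1]
    exact ((((continuous_pow a).mul Real.continuous_mul_log).div_const _).sub
      ((continuous_pow (a+1)).div_const _)).continuousOn
  have hderiv : ∀ x ∈ Ioo (0:ℝ) 1, HasDerivWithinAt G (x ^ a * Real.log x) (Ioi x) x := by
    intro x hx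
    have hx0 : x ≠ 0 := ne_of_gt hx.1
    have h1 : HasDerivAt (fun x : ℝ => x ^ (a+1)) (((a:ℝ)+1) * x ^ a) x := by
      simpa using hasDerivAt_pow (a+1) x
    have h2 : HasDerivAt (fun x : ℝ => x ^ (a+1) * Real.log x)
        ((((a:ℝ)+1) * x ^ a) * Real.log x + x ^ (a+1) * x⁻¹) x :=
      h1.mul (Real.hasDerivAt_log hx0)
    have h3 : HasDerivAt G
        (((((a:ℝ)+1) * x ^ a) * Real.log x + x ^ (a+1) * x⁻¹) / ((a:ℝ)+1)
          - (((a:ℝ)+1) * x ^ a) / ((a:ℝ)+1)^2) x := (h2.div_const _).sub (h1.div_const _)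
    have : (((((a:ℝ)+1) * x ^ a) * Real.log x + x ^ (a+1) * x⁻¹) / ((a:ℝ)+1)
          - (((a:ℝ)+1) * x ^ a) / ((a:ℝ)+1)^2) = x ^ a * Real.log x := by
      rw [pow_succ]
      field_simp
      ring
    rw [this] at h3
    exact h3.hasDerivWithinAt
  have hint : IntervalIntegrable (fun x : ℝ => x ^ a * Real.log x) volume 0 1 := by
    have := intInt_ppl a 0
    simpa using this
  have := integral_eq_sub_of_hasDeriv_right_of_le zero_le_one hcont hderiv hint
  rw [this]
  simp only [hG]
  rw [Real.log_one, zero_pow (by omega : a + 1 ≠ 0)]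
  norm_num

private lemma J_eq (b : ℕ) : ∀ a : ℕ, ∫ x in (0:ℝ)..1, x ^ a * (1 - x) ^ b * Real.log x
    = (a.factorial * b.factorial : ℝ) / (a + b + 1).factorial
      * ((harmonic a : ℝ) - (harmonic (a + b + 1) : ℝ)) := by
  induction b with
  | zero =>
    intro a
    simp only [pow_zero, mul_one]
    rw [J_base a, Nat.add_zero, Nat.factorial_succ, harmonic_succ]
    have ha : (a : ℝ) + 1 ≠ 0 := by positivity
    have hfa : (a.factorial : ℝ) ≠ 0 := Nat.cast_ne_zero.mpr (Nat.factorial_ne_zero _)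
    push_cast
    field_simp
    ring
  | succ b ih =>
    intro a
    have ha : (a : ℝ) + 1 ≠ 0 := by positivity
    set G : ℝ → ℝ := fun x => x ^ (a+1) * (1 - x) ^ (b+1) * Real.log x with hGdef
    set g : ℝ → ℝ := fun x => ((a:ℝ)+1) * (x ^ a * (1 - x) ^ (b+1) * Real.log x)
        - ((b:ℝ)+1) * (x ^ (a+1) * (1 - x) ^ b * Real.log x)
        + x ^ a * (1 - x) ^ (b+1) with hgdef
    have hcont : ContinuousOn G (Icc (0:ℝ) 1) := by
      have h1 : G = fun x : ℝ => x ^ a * (1 - x) ^ (b+1) * (x * Real.log x) := by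
        funext x; unfold G; rw [pow_succ]; ring
      rw [h1]
      exact (((continuous_pow a).mul ((continuous_const.sub continuous_id).pow _)).mul
        Real.continuous_mul_log).continuousOn
    have hderiv : ∀ x ∈ Ioo (0:ℝ) 1, HasDerivWithinAt G (g x) (Ioi x) x := by
      intro x hx
      have hx0 : x ≠ 0 := ne_of_gt hx.1
      have h1 : HasDerivAt (fun x : ℝ => x ^ (a+1)) (((a:ℝ)+1) * x ^ a) x := by
        simpa using hasDerivAt_pow (a+1) x
      have h2 : HasDerivAt (fun x : ℝ => (1 - x) ^ (b+1)) ((((b:ℝ)+1) * (1-x) ^ b) * (-1)) x := by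
        have := (hasDerivAt_pow (b+1) (1 - x)).comp x ((hasDerivAt_id x).const_sub 1)
        simpa [Function.comp_def] using this
      have h3 := (h1.mul h2).mul (Real.hasDerivAt_log hx0)
      have heq : (((a:ℝ)+1) * x ^ a * (1 - x) ^ (b+1) + x ^ (a+1) * ((((b:ℝ)+1) * (1-x) ^ b) * (-1)))
            * Real.log x + x ^ (a+1) * (1 - x) ^ (b+1) * x⁻¹ = g x := by
        unfold g
        rw [pow_succ]
        field_simp
        ring
      simp only [Pi.mul_apply] at h3
      rw [heq] at h3
      exact h3.hasDerivWithinAt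
    have i1 := intInt_ppl a (b+1)
    have i2 := intInt_ppl (a+1) b
    have i3 : IntervalIntegrable (fun x : ℝ => x ^ a * (1 - x) ^ (b+1)) volume 0 1 :=
      (by fun_prop : Continuous fun x : ℝ => x ^ a * (1 - x) ^ (b+1)).intervalIntegrable 0 1
    have hgint : IntervalIntegrable g volume 0 1 := ((i1.const_mul _).sub (i2.const_mul _)).add i3
    have key : (∫ x in (0:ℝ)..1, g x) = 0 := by
      rw [integral_eq_sub_of_hasDeriv_right_of_le zero_le_one hcont hderiv hgint]
      unfold G
      norm_num
    rw [hgdef] at key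
    rw [integral_add ((i1.const_mul _).sub (i2.const_mul _)) i3,
      integral_sub (i1.const_mul _) (i2.const_mul _), intervalIntegral.integral_const_mul, intervalIntegral.integral_const_mul] at key
    have hfab : ((a + (b+1) + 1).factorial : ℝ) ≠ 0 := Nat.cast_ne_zero.mpr (Nat.factorial_ne_zero _)
    have hfa : (a.factorial : ℝ) ≠ 0 := Nat.cast_ne_zero.mpr (Nat.factorial_ne_zero _)
    have hfb : (b.factorial : ℝ) ≠ 0 := Nat.cast_ne_zero.mpr (Nat.factorial_ne_zero _)
    have hJ : (∫ x in (0:ℝ)..1, x ^ a * (1-x)^(b+1) * Real.log x)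
        = (((b:ℝ)+1) * (∫ x in (0:ℝ)..1, x ^ (a+1) * (1-x)^b * Real.log x)
          - (∫ x in (0:ℝ)..1, x ^ a * (1-x)^(b+1))) / ((a:ℝ)+1) := by
      rw [eq_div_iff ha]; linear_combination key
    have heq2 : a + 1 + b + 1 = a + (b+1) + 1 := by omega
    rw [hJ, ih (a+1), beta_nat (b+1) a, heq2, harmonic_succ a,
      Nat.factorial_succ a, Nat.factorial_succ b]
    push_cast
    field_simp
    ring
private lemma C1 (k : ℕ) : ∫ x in (0:ℝ)..1, x ^ k * (1 - x) ^ (2*k) * Real.log (x / (1 - x))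
    = ((harmonic k : ℝ) - (harmonic (2*k) : ℝ))
      * ((k.factorial * (2*k).factorial : ℝ) / (3*k+1).factorial) := by
  have hcongr : ∀ x ∈ Set.uIcc (0:ℝ) 1,
      x ^ k * (1 - x) ^ (2*k) * Real.log (x / (1 - x))
      = x ^ k * (1 - x) ^ (2*k) * Real.log x - x ^ k * (1 - x) ^ (2*k) * Real.log (1 - x) := by
    intro x hx
    rw [Set.uIcc_of_le zero_le_one] at hx
    rcases eq_or_lt_of_le hx.1 with h0 | h0
    · simp [← h0]
    rcases eq_or_lt_of_le hx.2 with h1 | h1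
    · simp [h1]
    rw [Real.log_div (ne_of_gt h0) (by linarith : 1 - x ≠ 0)]
    ring
  rw [intervalIntegral.integral_congr hcongr]
  have i1 := intInt_ppl k (2*k)
  have hGswap : (fun x : ℝ => x ^ (2*k) * (1-x) ^ k * Real.log x)
      = fun x : ℝ => (1-x) ^ k * x ^ (2*k) * Real.log x := by funext x; ring
  have i2 : IntervalIntegrable (fun x : ℝ => x ^ k * (1 - x) ^ (2*k) * Real.log (1 - x))
      volume 0 1 := by
    have h := (intInt_ppl (2*k) k).comp_sub_left 1
    simp only [sub_self, sub_zero] at h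
    have : (fun x : ℝ => x ^ k * (1 - x) ^ (2*k) * Real.log (1 - x))
        = fun x : ℝ => (1 - x) ^ (2*k) * (1 - (1 - x)) ^ k * Real.log (1 - x) := by
      funext x; ring_nf
    rw [this]
    exact h.symm
  rw [intervalIntegral.integral_sub i1 i2]
  have hsub : (∫ x in (0:ℝ)..1, x ^ k * (1 - x) ^ (2*k) * Real.log (1 - x))
      = ∫ x in (0:ℝ)..1, x ^ (2*k) * (1-x) ^ k * Real.log x := by
    have : (fun x : ℝ => x ^ k * (1 - x) ^ (2*k) * Real.log (1 - x))
        = fun x : ℝ => (1 - x) ^ (2*k) * (1 - (1 - x)) ^ k * Real.log (1 - x) := by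
      funext x; ring_nf
    rw [this]
    have := intervalIntegral.integral_comp_sub_left
      (fun u : ℝ => u ^ (2*k) * (1-u) ^ k * Real.log u) 1 (a := 0) (b := 1)
    simp only [sub_self, sub_zero] at this
    rw [this]
  rw [hsub, J_eq (2*k) k, J_eq k (2*k)]
  have e1 : k + 2*k + 1 = 3*k+1 := by omega
  have e2 : 2*k + k + 1 = 3*k+1 := by omega
  rw [e1, e2]
  push_cast
  ring
theorem stmt_15 (z : ℂ) (hz : ‖z‖ < 1) :
    ∑' k : ℕ, ((harmonic (2 * k) : ℂ) - (harmonic k : ℂ)) * z ^ k /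
        ((3 * k + 1) * (Nat.choose (3 * k) k : ℂ)) =
      -∫ x in (0:ℝ)..1, (Real.log (x / (1 - x)) : ℂ) /
        (1 - z * (x : ℂ) * (1 - (x : ℂ)) ^ 2) := by
  set μ := volume.restrict (Set.Ioc (0:ℝ) 1) with hμ
  set F : ℕ → ℝ → ℂ := fun k x =>
    ((Real.log (x / (1 - x)) : ℝ) : ℂ) * (z * (x:ℂ) * (1 - (x:ℂ)) ^ 2) ^ k with hFdef
  -- norm bound on the geometric ratio
  have habs : ∀ x ∈ Set.Icc (0:ℝ) 1, ‖z * (x:ℂ) * (1 - (x:ℂ)) ^ 2‖ ≤ ‖z‖ := by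
    intro x hx
    have hcast : (1 : ℂ) - (x:ℂ) = ((1 - x : ℝ) : ℂ) := by push_cast; ring
    rw [hcast, norm_mul, norm_mul, norm_pow, Complex.norm_real, Complex.norm_real, Real.norm_eq_abs, Real.norm_eq_abs]
    have h1 : |x| ≤ 1 := abs_le.mpr ⟨by linarith [hx.1], hx.2⟩
    have h2 : |1 - x| ≤ 1 := abs_le.mpr ⟨by linarith [hx.2], by linarith [hx.1]⟩
    have ha := norm_nonneg z
    have h2' : |1 - x| ^ 2 ≤ 1 := pow_le_one₀ (abs_nonneg _) h2
    exact le_trans (mul_le_of_le_one_right (mul_nonneg ha (abs_nonneg x)) h2')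
      (mul_le_of_le_one_right ha h1)
  -- integrable dominating function
  have l1 : IntervalIntegrable Real.log volume 0 1 := by
    have := intInt_ppl 0 0
    simpa using this
  have l2 : IntervalIntegrable (fun x : ℝ => Real.log (1 - x)) volume 0 1 := by
    have := (l1.comp_sub_left 1)
    simpa using this.symm
  have hg : Integrable (fun x : ℝ => |Real.log x| + |Real.log (1 - x)|) μ := by
    have := l1.abs.add l2.abs
    rw [intervalIntegrable_iff_integrableOn_Ioc_of_le zero_le_one] at this
    exact this
  -- pointwise norm bound
  have hbound : ∀ k : ℕ, ∀ x ∈ Set.Ioc (0:ℝ) 1,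
      ‖F k x‖ ≤ ‖z‖ ^ k * (|Real.log x| + |Real.log (1 - x)|) := by
    intro k x hx
    have hxI : x ∈ Set.Icc (0:ℝ) 1 := ⟨hx.1.le, hx.2⟩
    have hlog : |Real.log (x / (1 - x))| ≤ |Real.log x| + |Real.log (1 - x)| := by
      rcases eq_or_lt_of_le hx.2 with h1 | h1
      · simp [← h1, Real.log_one]
      · rw [Real.log_div (ne_of_gt hx.1) (by linarith : 1 - x ≠ 0)]
        exact (abs_sub _ _)
    have hwk : ‖(z * (x:ℂ) * (1 - (x:ℂ)) ^ 2) ^ k‖ ≤ ‖z‖ ^ k := by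
      rw [norm_pow]
      exact pow_le_pow_left₀ (norm_nonneg _) (habs x hxI) k
    calc ‖F k x‖ = |Real.log (x / (1 - x))| * ‖(z * (x:ℂ) * (1 - (x:ℂ)) ^ 2) ^ k‖ := by
          rw [hFdef]; simp [Complex.norm_real]
      _ ≤ (|Real.log x| + |Real.log (1 - x)|) * ‖z‖ ^ k :=
          mul_le_mul hlog hwk (norm_nonneg _) (by positivity)
      _ = ‖z‖ ^ k * (|Real.log x| + |Real.log (1 - x)|) := mul_comm _ _
  have hFmeas : ∀ k : ℕ, AEStronglyMeasurable (F k) μ := by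
    intro k
    apply Measurable.aestronglyMeasurable
    apply Measurable.mul
    · exact Complex.measurable_ofReal.comp
        (Real.measurable_log.comp (measurable_id.div (measurable_const.sub measurable_id)))
    · exact ((Continuous.pow (by fun_prop) k)).measurable
  have hFint : ∀ k : ℕ, Integrable (F k) μ := by
    intro k
    refine (hg.const_mul (‖z‖ ^ k)).mono' (hFmeas k) ?_
    filter_upwards [ae_restrict_mem measurableSet_Ioc] with x hx
    exact hbound k x hx
  have hnorm : ∀ k : ℕ, (∫ x, ‖F k x‖ ∂μ)
      ≤ ‖z‖ ^ k * ∫ x, (|Real.log x| + |Real.log (1 - x)|) ∂μ := by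
    intro k
    rw [← MeasureTheory.integral_const_mul]
    refine integral_mono_ae (hFint k).norm (hg.const_mul _) ?_
    filter_upwards [ae_restrict_mem measurableSet_Ioc] with x hx
    exact hbound k x hx
  have hsum : Summable fun k : ℕ => ∫ x, ‖F k x‖ ∂μ := by
    refine Summable.of_nonneg_of_le (fun k => integral_nonneg fun x => norm_nonneg _) hnorm ?_
    exact (summable_geometric_of_lt_one (norm_nonneg z) hz).mul_right _
  have hswap := integral_tsum_of_summable_integral_norm hFint hsum
  -- value of each term
  have hterm : ∀ k : ℕ, (∫ x, F k x ∂μ)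
      = z ^ k * ((((harmonic k : ℝ) - (harmonic (2*k) : ℝ))
        * ((k.factorial * (2*k).factorial : ℝ) / (3*k+1).factorial) : ℝ) : ℂ) := by
    intro k
    have h1 : ∀ x : ℝ, F k x
        = z ^ k * (((x ^ k * (1-x) ^ (2*k) * Real.log (x / (1 - x)) : ℝ) : ℂ)) := by
      intro x
      rw [hFdef]
      simp only
      rw [mul_pow, mul_pow, ← pow_mul]
      push_cast
      ring
    simp_rw [h1]
    rw [MeasureTheory.integral_const_mul]
    congr 1
    rw [← C1 k, intervalIntegral.integral_of_le zero_le_one]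
    exact _root_.integral_ofReal
  -- rewrite each summand of the LHS
  have hLHS : ∀ k : ℕ, ((harmonic (2 * k) : ℂ) - (harmonic k : ℂ)) * z ^ k /
        ((3 * k + 1) * (Nat.choose (3 * k) k : ℂ))
      = -(z ^ k * ((((harmonic k : ℝ) - (harmonic (2*k) : ℝ))
        * ((k.factorial * (2*k).factorial : ℝ) / (3*k+1).factorial) : ℝ) : ℂ)) := by
    intro k
    have hnat : (3*k).choose k * k.factorial * (2*k).factorial = (3*k).factorial := by
      have := Nat.choose_mul_factorial_mul_factorial (show k ≤ 3*k by omega)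
      rwa [show 3*k - k = 2*k by omega] at this
    have hfact : ((3*k+1).factorial : ℂ)
        = ((3:ℂ)*(k:ℂ)+1) * ((3*k).choose k : ℂ) * (k.factorial : ℂ) * ((2*k).factorial : ℂ) := by
      rw [Nat.factorial_succ, ← hnat]
      push_cast
      ring
    have hc : ((3*k).choose k : ℂ) ≠ 0 :=
      Nat.cast_ne_zero.mpr (Nat.choose_pos (by omega)).ne'
    have h31 : ((3:ℂ)*(k:ℂ) + 1) ≠ 0 := by
      have : ((3*k+1 : ℕ) : ℂ) ≠ 0 := Nat.cast_ne_zero.mpr (by omega)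
      push_cast at this
      exact this
    have hfk : (k.factorial : ℂ) ≠ 0 := Nat.cast_ne_zero.mpr (Nat.factorial_ne_zero _)
    have hf2k : ((2*k).factorial : ℂ) ≠ 0 := Nat.cast_ne_zero.mpr (Nat.factorial_ne_zero _)
    push_cast
    rw [hfact]
    field_simp
    ring
  calc ∑' k : ℕ, ((harmonic (2 * k) : ℂ) - (harmonic k : ℂ)) * z ^ k /
        ((3 * k + 1) * (Nat.choose (3 * k) k : ℂ))
      = ∑' k : ℕ, -(∫ x, F k x ∂μ) := by
        refine tsum_congr fun k => ?_
        rw [hterm k]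
        exact hLHS k
    _ = -∑' k : ℕ, ∫ x, F k x ∂μ := tsum_neg
    _ = -∫ x, (∑' k : ℕ, F k x) ∂μ := by rw [hswap]
    _ = -∫ x in (0:ℝ)..1, (Real.log (x / (1 - x)) : ℂ) /
        (1 - z * (x : ℂ) * (1 - (x : ℂ)) ^ 2) := by
        rw [intervalIntegral.integral_of_le zero_le_one]
        congr 1
        refine setIntegral_congr_fun measurableSet_Ioc fun x hx => ?_
        have hxI : x ∈ Set.Icc (0:ℝ) 1 := ⟨hx.1.le, hx.2⟩
        have hw : ‖z * (x:ℂ) * (1 - (x:ℂ)) ^ 2‖ < 1 :=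
          lt_of_le_of_lt (habs x hxI) hz
        rw [hFdef]
        simp only
        rw [tsum_mul_left, tsum_geometric_of_norm_lt_one hw]
        exact (div_eq_mul_inv _ _).symm
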